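/- Consider the coupled bi-virus SIS ODE system on ℝ^{3n}: ẋ¹ᵢ = -δ¹ᵢx¹ᵢ + δ²ᵢzᵢ + (1-x¹ᵢ-x²ᵢ-zᵢ)Σⱼβ¹ᵢⱼ(x¹ⱼ+zⱼ) - x¹ᵢ ε¹ Σⱼβ²ᵢⱼ(x²ⱼ+zⱼ); ẋ²ᵢ = -δ²ᵢx²ᵢ + δ¹ᵢzᵢ + (1-x¹ᵢ-x²ᵢ-zᵢ)Σⱼβ²ᵢⱼ(x²ⱼ+zⱼ) - x²ᵢ ε² Σⱼβ¹ᵢⱼ(x¹ⱼ+zⱼ); żᵢ = -(δ¹ᵢ+δ²ᵢ)zᵢ + x¹ᵢ ε¹ Σⱼβ²ᵢⱼ(x²ⱼ+zⱼ) + x²ᵢ ε² Σⱼβ¹ᵢⱼ(x¹ⱼ+zⱼ). Assume all δᵏᵢ ≥ 0, βᵏᵢⱼ ≥ 0, εᵏ ≥ 0. Then the set D = {(x¹,x²,z) : x¹ ≥ 0, x² ≥ 0, z ≥ 0, x¹+x²+z ≤ 1} is positively invariant: any solution with initial state in D satisfies x¹ᵢ(t), x²ᵢ(t), zᵢ(t),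 x¹ᵢ(t)+x²ᵢ(t)+zᵢ(t) ∈ [0,1] for all i and all t ≥ 0. -/

import Mathlib

open Matrix Polynomial

variable {m : Type*} [Fintype m] [DecidableEq m]

/-- Spectral abscissa: the largest real part among the (complex) eigenvalues. -/
noncomputable def specAbscissa (M : Matrix m m ℝ) : ℝ :=
  sSup {x : ℝ | ∃ μ ∈ M.charpoly.aroots ℂ, x = μ.re}

/-- Spectral radius: the largest modulus among the (complex) eigenvalues. -/
noncomputable def specRadius (M : Matrix m m ℝ) : ℝ :=
  sSup {x : ℝ | ∃ μ ∈ M.charpoly.aroots ℂ, x = ‖μ‖}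

/-- A matrix is Metzler if all off-diagonal entries are nonnegative. -/
def IsMetzler (A : Matrix m m ℝ) : Prop := ∀ i j, i ≠ j → 0 ≤ A i j

/-- A matrix is Hurwitz if all its eigenvalues have strictly negative real part. -/
def IsHurwitz (A : Matrix m m ℝ) : Prop := ∀ μ ∈ A.charpoly.aroots ℂ, μ.re < 0

/-- A matrix is irreducible if its associated digraph is strongly connected. -/
def IsIrreducibleMat (A : Matrix m m ℝ) : Prop :=
  ∀ i j : m, Relation.ReflTransGen (fun a b => A a b ≠ 0) i j


open Filter Topology Set

private lemma key_prod {a P F R : ℝ} (hF : 0 ≤ F) (ha1 : a ≤ F) (ha2 : -4 ≤ a)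
    (hP1 : -(2*F*R) ≤ P) (hP2 : P ≤ 8*R) : a * P ≤ 8*(R*F) := by
  rcases le_or_gt 0 P with h | h
  · nlinarith
  · nlinarith

private lemma max_invariance {ι : Type*} [Fintype ι] [Nonempty ι] (g G : ι → ℝ → ℝ) (K : ℝ)
    (hg : ∀ k t, HasDerivAt (g k) (G k t) t)
    (h0 : ∀ k, g k 0 ≤ 0)
    (hK : ∀ t, 0 ≤ t → ∀ k, (∀ j, g j t ≤ 1) → (∀ j, g j t ≤ g k t) → G k t ≤ K * g k t) :
    ∀ t, 0 ≤ t → ∀ k, g k t ≤ 0 := by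
  classical
  set f : ℝ → ℝ := fun t => Finset.univ.sup' Finset.univ_nonempty (fun k => g k t) with hfdef
  have hfk : ∀ k t, g k t ≤ f t := fun k t => Finset.le_sup' (fun k => g k t) (Finset.mem_univ k)
  have hfex : ∀ t, ∃ k, g k t = f t := by
    intro t
    obtain ⟨k, -, hk⟩ := Finset.exists_mem_eq_sup' Finset.univ_nonempty (fun k => g k t)
    exact ⟨k, hk.symm⟩
  have hfc : Continuous f := by
    apply Continuous.finset_sup'_apply
    intro k _
    exact continuous_iff_continuousAt.2 fun t => (hg k t).continuousAt
  have Ane : ∀ x : ℝ, (Finset.univ.filter (fun j => g j x = f x)).Nonempty := by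
    intro x
    obtain ⟨j, hj⟩ := hfex x
    exact ⟨j, Finset.mem_filter.2 ⟨Finset.mem_univ j, hj⟩⟩
  set f' : ℝ → ℝ :=
    fun x => (Finset.univ.filter (fun j => g j x = f x)).sup' (Ane x) (fun j => G j x) with hf'def
  have claim1 : ∀ x r, f' x < r → ∃ᶠ z in 𝓝[>] x, (z - x)⁻¹ * (f z - f x) < r := by
    intro x r hr
    have hall : ∀ j, ∀ᶠ z in 𝓝[>] x, (z - x)⁻¹ * (g j z - f x) < r := by
      intro j
      rcases eq_or_lt_of_le (hfk j x) with hj | hj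
      · have hGj : G j x ≤ f' x :=
          Finset.le_sup' (fun j => G j x) (Finset.mem_filter.2 ⟨Finset.mem_univ j, hj⟩)
        have hten : Tendsto (slope (g j) x) (𝓝[>] x) (𝓝 (G j x)) :=
          (hasDerivAt_iff_tendsto_slope.1 (hg j x)).mono_left
            (nhdsWithin_mono x fun z hz => ne_of_gt hz)
        have hev := hten.eventually_lt_const (lt_of_le_of_lt hGj hr)
        filter_upwards [hev, self_mem_nhdsWithin] with z hz hz'
        have hzx : x < z := hz'
        have : (z - x)⁻¹ * (g j z - f x) = slope (g j) x z := by
          rw [slope_def_field, ← hj, div_eq_inv_mul]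
        rw [this]; exact hz
      · set c' := (f x - g j x) / 2 with hc'def
        have hc' : 0 < c' := by rw [hc'def]; linarith
        have h1 : ∀ᶠ z in 𝓝[>] x, g j z - f x < -c' := by
          have hten : Tendsto (g j) (𝓝[>] x) (𝓝 (g j x)) :=
            ((hg j x).continuousAt.tendsto).mono_left nhdsWithin_le_nhds
          have : ∀ᶠ z in 𝓝[>] x, g j z < f x - c' := by
            apply hten.eventually_lt_const; rw [hc'def]; linarith
          filter_upwards [this] with z hz; linarith
        set d := c' / (max 1 (-r)) with hddef
        have hmaxpos : (0:ℝ) < max 1 (-r) := lt_of_lt_of_le one_pos (le_max_left _ _)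
        have hd : 0 < d := div_pos hc' hmaxpos
        have h2 : Ioo x (x + d) ∈ 𝓝[>] x :=
          Ioo_mem_nhdsGT_of_mem ⟨le_refl x, by linarith⟩
        filter_upwards [h1, eventually_mem_set.2 h2] with z hz1 hz2
        have hzx : (0:ℝ) < z - x := sub_pos.2 hz2.1
        have hzd : z - x < d := by have := hz2.2; linarith
        have hinv : 0 < (z - x)⁻¹ := inv_pos.2 hzx
        have key : -c' < r * (z - x) := by
          have hA : (-r) * (z - x) ≤ max 1 (-r) * (z - x) :=
            mul_le_mul_of_nonneg_right (le_max_right _ _) hzx.le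
          have hB : max 1 (-r) * (z - x) < max 1 (-r) * d :=
            mul_lt_mul_of_pos_left hzd hmaxpos
          have hC : max 1 (-r) * d = c' := by
            rw [hddef, mul_div_cancel₀ _ (ne_of_gt hmaxpos)]
          nlinarith
        have step1 : (z - x)⁻¹ * (g j z - f x) < (z - x)⁻¹ * (-c') :=
          mul_lt_mul_of_pos_left hz1 hinv
        have step2 : (z - x)⁻¹ * (-c') < r := by
          rw [inv_mul_lt_iff₀ hzx]
          nlinarith
        linarith
    apply Filter.Eventually.frequently
    filter_upwards [Filter.eventually_all.2 hall] with z hz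
    obtain ⟨j0, hj0⟩ := hfex z
    have := hz j0
    rw [hj0] at this
    exact this
  intro t ht k
  by_contra hpos
  push_neg at hpos
  have hft : 0 < f t := lt_of_lt_of_le hpos (hfk k t)
  have hf0 : f 0 ≤ 0 := Finset.sup'_le _ _ fun j _ => h0 j
  have htpos : 0 < t := by
    rcases ht.lt_or_eq with h | h
    · exact h
    · exfalso; rw [← h] at hft; linarith
  set c := min 1 (f t) with hcdef
  have hc : 0 < c := lt_min one_pos hft
  have hc1 : c ≤ 1 := min_le_left _ _
  set S := Icc 0 t ∩ {s | c ≤ f s} with hSdef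
  have hSne : S.Nonempty := ⟨t, ⟨ht, le_refl t⟩, min_le_right 1 (f t)⟩
  have hScl : IsClosed S := isClosed_Icc.inter (isClosed_le continuous_const hfc)
  have hSbd : BddBelow S := ⟨0, fun s hs => hs.1.1⟩
  set b := sInf S with hbdef
  have hbS : b ∈ S := hScl.csInf_mem hSne hSbd
  have hb0 : 0 ≤ b := hbS.1.1
  have hbt : b ≤ t := hbS.1.2
  have hbc : c ≤ f b := hbS.2
  have hlt : ∀ s ∈ Ico 0 b, f s < c := by
    intro s hs
    by_contra h
    push_neg at h
    have hsS : s ∈ S := ⟨⟨hs.1, hs.2.le.trans hbt⟩, h⟩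
    exact absurd (csInf_le hSbd hsS) (not_le.2 hs.2)
  have hbound : ∀ x ∈ Ico 0 b, f' x ≤ K * f x + 0 := by
    intro x hx
    obtain ⟨j1, hj1mem, hj1⟩ :=
      Finset.exists_mem_eq_sup' (Ane x) (fun j => G j x)
    have hj1f : g j1 x = f x := (Finset.mem_filter.1 hj1mem).2
    have hle1 : ∀ j, g j x ≤ 1 := fun j => (hfk j x).trans ((hlt x hx).le.trans hc1)
    have hmax : ∀ j, g j x ≤ g j1 x := fun j => (hfk j x).trans_eq hj1f.symm
    have := hK x hx.1 j1 hle1 hmax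
    rw [hj1f] at this
    rw [hf'def]
    simp only
    rw [hj1]
    linarith
  have hcon := le_gronwallBound_of_liminf_deriv_right_le (f := f) (f' := f')
    (δ := 0) (K := K) (ε := 0) (a := 0) (b := b)
    hfc.continuousOn (fun x _ r hr => claim1 x r hr) hf0 hbound b ⟨hb0, le_refl b⟩
  rw [sub_zero, gronwallBound_ε0_δ0] at hcon
  linarith



open Filter Topology Set

private lemma case1_bound {d1 d2 e1 e2 a1 a2 cc P1 P2 R1 R2 S1 S2 D1 D2 F : ℝ}
    (hF0 : 0 ≤ F) (hF1 : F ≤ 1) (hFa : a1 = -F)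
    (ha2 : -F ≤ a2) (hcc : -F ≤ cc) (hs : a1 + a2 + cc ≤ 1 + F)
    (hd1 : 0 ≤ d1) (hd2 : 0 ≤ d2) (hd1D : d1 ≤ D1) (hd2D : d2 ≤ D2)
    (hD1 : 0 ≤ D1) (hD2 : 0 ≤ D2) (he1 : 0 ≤ e1) (he2 : 0 ≤ e2)
    (hR1 : 0 ≤ R1) (hR2 : 0 ≤ R2) (hR1S : R1 ≤ S1) (hR2S : R2 ≤ S2)
    (hS1 : 0 ≤ S1) (hS2 : 0 ≤ S2)
    (hP1l : -(2*F*R1) ≤ P1) (hP1u : P1 ≤ 8*R1)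
    (hP2l : -(2*F*R2) ≤ P2) (hP2u : P2 ≤ 8*R2) :
    -(-d1*a1 + d2*cc + (1 - a1 - a2 - cc)*P1 - a1*e1*P2)
      ≤ (D1 + D2 + (10 + 10*e1 + 10*e2)*(S1 + S2)) * F := by
  subst hFa
  have T3 : (-F + a2 + cc - 1) * P1 ≤ 8*(R1*F) :=
    key_prod hF0 (by linarith) (by linarith) hP1l hP1u
  have hQ2u : e1 * P2 ≤ 8*(e1*R2) := by nlinarith
  have hQ2l : -(2*F*(e1*R2)) ≤ e1 * P2 := by nlinarith
  have T4 : (-F) * (e1*P2) ≤ 8*((e1*R2)*F) :=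
    key_prod hF0 (by linarith) (by linarith) hQ2l hQ2u
  nlinarith [T3, T4, mul_nonneg hd1 hF0, mul_nonneg hd2 (by linarith : (0:ℝ) ≤ cc + F),
    mul_le_mul_of_nonneg_right hd2D hF0, mul_le_mul_of_nonneg_right hR1S hF0,
    mul_le_mul_of_nonneg_right (mul_le_mul_of_nonneg_left hR2S he1) hF0,
    mul_nonneg hD1 hF0, mul_nonneg hS1 hF0, mul_nonneg hS2 hF0,
    mul_nonneg (mul_nonneg he1 hS1) hF0, mul_nonneg (mul_nonneg he1 hS2) hF0,
    mul_nonneg (mul_nonneg he2 hS1) hF0, mul_nonneg (mul_nonneg he2 hS2) hF0]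

private lemma case3_bound {d1 d2 e1 e2 a1 a2 cc P1 P2 R1 R2 S1 S2 D1 D2 F : ℝ}
    (hF0 : 0 ≤ F) (hF1 : F ≤ 1) (hFc : cc = -F)
    (ha1 : -F ≤ a1) (ha2 : -F ≤ a2) (hs : a1 + a2 + cc ≤ 1 + F)
    (hd1 : 0 ≤ d1) (hd2 : 0 ≤ d2) (hd1D : d1 ≤ D1) (hd2D : d2 ≤ D2)
    (hD1 : 0 ≤ D1) (hD2 : 0 ≤ D2) (he1 : 0 ≤ e1) (he2 : 0 ≤ e2)
    (hR1 : 0 ≤ R1) (hR2 : 0 ≤ R2) (hR1S : R1 ≤ S1) (hR2S : R2 ≤ S2)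
    (hS1 : 0 ≤ S1) (hS2 : 0 ≤ S2)
    (hP1l : -(2*F*R1) ≤ P1) (hP1u : P1 ≤ 8*R1)
    (hP2l : -(2*F*R2) ≤ P2) (hP2u : P2 ≤ 8*R2) :
    -(-(d1 + d2)*cc + a1*e1*P2 + a2*e2*P1)
      ≤ (D1 + D2 + (10 + 10*e1 + 10*e2)*(S1 + S2)) * F := by
  subst hFc
  have hQ2u : e1 * P2 ≤ 8*(e1*R2) := by nlinarith
  have hQ2l : -(2*F*(e1*R2)) ≤ e1 * P2 := by nlinarith
  have T1 : (-a1) * (e1*P2) ≤ 8*((e1*R2)*F) :=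
    key_prod hF0 (by linarith) (by linarith) hQ2l hQ2u
  have hQ1u : e2 * P1 ≤ 8*(e2*R1) := by nlinarith
  have hQ1l : -(2*F*(e2*R1)) ≤ e2 * P1 := by nlinarith
  have T2 : (-a2) * (e2*P1) ≤ 8*((e2*R1)*F) :=
    key_prod hF0 (by linarith) (by linarith) hQ1l hQ1u
  nlinarith [T1, T2, mul_nonneg (add_nonneg hd1 hd2) hF0,
    mul_le_mul_of_nonneg_right (mul_le_mul_of_nonneg_left hR2S he1) hF0,
    mul_le_mul_of_nonneg_right (mul_le_mul_of_nonneg_left hR1S he2) hF0,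
    mul_nonneg hD1 hF0, mul_nonneg hD2 hF0, mul_nonneg hS1 hF0, mul_nonneg hS2 hF0,
    mul_nonneg (mul_nonneg he1 hS1) hF0, mul_nonneg (mul_nonneg he1 hS2) hF0,
    mul_nonneg (mul_nonneg he2 hS1) hF0, mul_nonneg (mul_nonneg he2 hS2) hF0]

private lemma case4_bound {d1 d2 e1 e2 a1 a2 cc P1 P2 R1 R2 S1 S2 D1 D2 F : ℝ}
    (hF0 : 0 ≤ F) (hF1 : F ≤ 1) (hFs : a1 + a2 + cc - 1 = F)
    (ha1 : -F ≤ a1) (ha2 : -F ≤ a2) (hcc : -F ≤ cc)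
    (hd1 : 0 ≤ d1) (hd2 : 0 ≤ d2) (hd1D : d1 ≤ D1) (hd2D : d2 ≤ D2)
    (hD1 : 0 ≤ D1) (hD2 : 0 ≤ D2) (he1 : 0 ≤ e1) (he2 : 0 ≤ e2)
    (hR1 : 0 ≤ R1) (hR2 : 0 ≤ R2) (hR1S : R1 ≤ S1) (hR2S : R2 ≤ S2)
    (hS1 : 0 ≤ S1) (hS2 : 0 ≤ S2)
    (hP1l : -(2*F*R1) ≤ P1) (hP1u : P1 ≤ 8*R1)
    (hP2l : -(2*F*R2) ≤ P2) (hP2u : P2 ≤ 8*R2) :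
    -d1*a1 - d2*a2 + (1 - a1 - a2 - cc)*(P1 + P2)
      ≤ (D1 + D2 + (10 + 10*e1 + 10*e2)*(S1 + S2)) * F := by
  have T : (1 - a1 - a2 - cc) * (P1 + P2) ≤ 8*((R1 + R2)*F) :=
    key_prod hF0 (by linarith) (by linarith) (by linarith) (by linarith)
  nlinarith [T, mul_nonneg hd1 (by linarith : (0:ℝ) ≤ a1 + F),
    mul_nonneg hd2 (by linarith : (0:ℝ) ≤ a2 + F),
    mul_le_mul_of_nonneg_right hd1D hF0, mul_le_mul_of_nonneg_right hd2D hF0,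
    mul_le_mul_of_nonneg_right hR1S hF0, mul_le_mul_of_nonneg_right hR2S hF0,
    mul_nonneg hS1 hF0, mul_nonneg hS2 hF0,
    mul_nonneg (mul_nonneg he1 hS1) hF0, mul_nonneg (mul_nonneg he1 hS2) hF0,
    mul_nonneg (mul_nonneg he2 hS1) hF0, mul_nonneg (mul_nonneg he2 hS2) hF0]

section BiVirusMain

variable {n : ℕ}

private def gfun (x1 x2 z : ℝ → Fin n → ℝ) : Option (Fin n × Fin 4) → ℝ → ℝ
  | none => fun _ => 0
  | some (i, k) => fun t =>
      if k.1 = 0 then -x1 t i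
      else if k.1 = 1 then -x2 t i
      else if k.1 = 2 then -z t i
      else x1 t i + x2 t i + z t i - 1

private def Gfun (δ1 δ2 : Fin n → ℝ) (B1 B2 : Matrix (Fin n) (Fin n) ℝ) (ε1 ε2 : ℝ)
    (x1 x2 z : ℝ → Fin n → ℝ) : Option (Fin n × Fin 4) → ℝ → ℝ
  | none => fun _ => 0
  | some (i, k) => fun t =>
      if k.1 = 0 then -(-δ1 i * x1 t i + δ2 i * z t i
        + (1 - x1 t i - x2 t i - z t i) * ∑ j, B1 i j * (x1 t j + z t j)
        - x1 t i * ε1 * ∑ j, B2 i j * (x2 t j + z t j))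
      else if k.1 = 1 then -(-δ2 i * x2 t i + δ1 i * z t i
        + (1 - x1 t i - x2 t i - z t i) * ∑ j, B2 i j * (x2 t j + z t j)
        - x2 t i * ε2 * ∑ j, B1 i j * (x1 t j + z t j))
      else if k.1 = 2 then -(-(δ1 i + δ2 i) * z t i
        + x1 t i * ε1 * ∑ j, B2 i j * (x2 t j + z t j)
        + x2 t i * ε2 * ∑ j, B1 i j * (x1 t j + z t j))
      else ((-δ1 i * x1 t i + δ2 i * z t i
        + (1 - x1 t i - x2 t i - z t i) * ∑ j, B1 i j * (x1 t j + z t j)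
        - x1 t i * ε1 * ∑ j, B2 i j * (x2 t j + z t j))
        + (-δ2 i * x2 t i + δ1 i * z t i
        + (1 - x1 t i - x2 t i - z t i) * ∑ j, B2 i j * (x2 t j + z t j)
        - x2 t i * ε2 * ∑ j, B1 i j * (x1 t j + z t j))
        + (-(δ1 i + δ2 i) * z t i
        + x1 t i * ε1 * ∑ j, B2 i j * (x2 t j + z t j)
        + x2 t i * ε2 * ∑ j, B1 i j * (x1 t j + z t j)))

/-- The set D is positively invariant for the coupled bi-virus SIS dynamics. -/
theorem coupled_bivirus_positively_invariant
    {n : ℕ} (δ1 δ2 : Fin n → ℝ) (B1 B2 : Matrix (Fin n) (Fin n) ℝ) (ε1 ε2 : ℝ)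
    (hδ1 : ∀ i, 0 ≤ δ1 i) (hδ2 : ∀ i, 0 ≤ δ2 i)
    (hB1 : ∀ i j, 0 ≤ B1 i j) (hB2 : ∀ i j, 0 ≤ B2 i j)
    (hε1 : 0 ≤ ε1) (hε2 : 0 ≤ ε2)
    (x1 x2 z : ℝ → Fin n → ℝ)
    (hx1 : ∀ t (i : Fin n), HasDerivAt (fun s => x1 s i)
      (-δ1 i * x1 t i + δ2 i * z t i
        + (1 - x1 t i - x2 t i - z t i) * ∑ j, B1 i j * (x1 t j + z t j)
        - x1 t i * ε1 * ∑ j, B2 i j * (x2 t j + z t j)) t)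
    (hx2 : ∀ t (i : Fin n), HasDerivAt (fun s => x2 s i)
      (-δ2 i * x2 t i + δ1 i * z t i
        + (1 - x1 t i - x2 t i - z t i) * ∑ j, B2 i j * (x2 t j + z t j)
        - x2 t i * ε2 * ∑ j, B1 i j * (x1 t j + z t j)) t)
    (hz : ∀ t (i : Fin n), HasDerivAt (fun s => z s i)
      (-(δ1 i + δ2 i) * z t i
        + x1 t i * ε1 * ∑ j, B2 i j * (x2 t j + z t j)
        + x2 t i * ε2 * ∑ j, B1 i j * (x1 t j + z t j)) t)
    (h0 : ∀ i : Fin n, 0 ≤ x1 0 i ∧ 0 ≤ x2 0 i ∧ 0 ≤ z 0 i ∧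
      x1 0 i + x2 0 i + z 0 i ≤ 1) :
    ∀ t ≥ (0 : ℝ), ∀ i : Fin n,
      x1 t i ∈ Set.Icc (0 : ℝ) 1 ∧ x2 t i ∈ Set.Icc (0 : ℝ) 1 ∧
      z t i ∈ Set.Icc (0 : ℝ) 1 ∧
      x1 t i + x2 t i + z t i ∈ Set.Icc (0 : ℝ) 1 := by
  classical
  have gsn : ∀ s : ℝ, gfun x1 x2 z none s = 0 := fun s => rfl
  have gs0 : ∀ (j : Fin n) (s : ℝ), gfun x1 x2 z (some (j, 0)) s = -x1 s j := fun j s => rfl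
  have gs1 : ∀ (j : Fin n) (s : ℝ), gfun x1 x2 z (some (j, 1)) s = -x2 s j := fun j s => rfl
  have gs2 : ∀ (j : Fin n) (s : ℝ), gfun x1 x2 z (some (j, 2)) s = -z s j := fun j s => rfl
  have gs3 : ∀ (j : Fin n) (s : ℝ), gfun x1 x2 z (some (j, 3)) s
      = x1 s j + x2 s j + z s j - 1 := fun j s => rfl
  have gG0 : ∀ (j : Fin n) (s : ℝ), Gfun δ1 δ2 B1 B2 ε1 ε2 x1 x2 z (some (j, 0)) s
      = -(-δ1 j * x1 s j + δ2 j * z s j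
        + (1 - x1 s j - x2 s j - z s j) * ∑ l, B1 j l * (x1 s l + z s l)
        - x1 s j * ε1 * ∑ l, B2 j l * (x2 s l + z s l)) := fun j s => rfl
  have gG1 : ∀ (j : Fin n) (s : ℝ), Gfun δ1 δ2 B1 B2 ε1 ε2 x1 x2 z (some (j, 1)) s
      = -(-δ2 j * x2 s j + δ1 j * z s j
        + (1 - x1 s j - x2 s j - z s j) * ∑ l, B2 j l * (x2 s l + z s l)
        - x2 s j * ε2 * ∑ l, B1 j l * (x1 s l + z s l)) := fun j s => rfl
  have gG2 : ∀ (j : Fin n) (s : ℝ), Gfun δ1 δ2 B1 B2 ε1 ε2 x1 x2 z (some (j, 2)) s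
      = -(-(δ1 j + δ2 j) * z s j
        + x1 s j * ε1 * ∑ l, B2 j l * (x2 s l + z s l)
        + x2 s j * ε2 * ∑ l, B1 j l * (x1 s l + z s l)) := fun j s => rfl
  have gG3 : ∀ (j : Fin n) (s : ℝ), Gfun δ1 δ2 B1 B2 ε1 ε2 x1 x2 z (some (j, 3)) s
      = ((-δ1 j * x1 s j + δ2 j * z s j
        + (1 - x1 s j - x2 s j - z s j) * ∑ l, B1 j l * (x1 s l + z s l)
        - x1 s j * ε1 * ∑ l, B2 j l * (x2 s l + z s l))
        + (-δ2 j * x2 s j + δ1 j * z s j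
        + (1 - x1 s j - x2 s j - z s j) * ∑ l, B2 j l * (x2 s l + z s l)
        - x2 s j * ε2 * ∑ l, B1 j l * (x1 s l + z s l))
        + (-(δ1 j + δ2 j) * z s j
        + x1 s j * ε1 * ∑ l, B2 j l * (x2 s l + z s l)
        + x2 s j * ε2 * ∑ l, B1 j l * (x1 s l + z s l))) := fun j s => rfl
  set S1 := ∑ i, ∑ j, B1 i j with hS1def
  set S2 := ∑ i, ∑ j, B2 i j with hS2def
  set D1 := ∑ i, δ1 i with hD1def
  set D2 := ∑ i, δ2 i with hD2def
  have hS1 : 0 ≤ S1 := Finset.sum_nonneg fun i _ => Finset.sum_nonneg fun j _ => hB1 i j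
  have hS2 : 0 ≤ S2 := Finset.sum_nonneg fun i _ => Finset.sum_nonneg fun j _ => hB2 i j
  have hD1 : 0 ≤ D1 := Finset.sum_nonneg fun i _ => hδ1 i
  have hD2 : 0 ≤ D2 := Finset.sum_nonneg fun i _ => hδ2 i
  have hR1 : ∀ i, 0 ≤ ∑ j, B1 i j := fun i => Finset.sum_nonneg fun j _ => hB1 i j
  have hR2 : ∀ i, 0 ≤ ∑ j, B2 i j := fun i => Finset.sum_nonneg fun j _ => hB2 i j
  have hR1S : ∀ i, (∑ j, B1 i j) ≤ S1 := fun i =>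
    Finset.single_le_sum (fun i _ => hR1 i) (Finset.mem_univ i)
  have hR2S : ∀ i, (∑ j, B2 i j) ≤ S2 := fun i =>
    Finset.single_le_sum (fun i _ => hR2 i) (Finset.mem_univ i)
  have hd1D : ∀ i, δ1 i ≤ D1 := fun i =>
    Finset.single_le_sum (fun i _ => hδ1 i) (Finset.mem_univ i)
  have hd2D : ∀ i, δ2 i ≤ D2 := fun i =>
    Finset.single_le_sum (fun i _ => hδ2 i) (Finset.mem_univ i)
  set K := D1 + D2 + (10 + 10*ε1 + 10*ε2) * (S1 + S2) with hKdef
  have hderiv : ∀ k t, HasDerivAt (gfun x1 x2 z k)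
      (Gfun δ1 δ2 B1 B2 ε1 ε2 x1 x2 z k t) t := by
    rintro (_ | ⟨i, kk⟩) t
    · exact hasDerivAt_const t (0:ℝ)
    · fin_cases kk
      · exact (hx1 t i).neg
      · exact (hx2 t i).neg
      · exact (hz t i).neg
      · exact (((hx1 t i).add (hx2 t i)).add (hz t i)).sub_const 1
  have hzero : ∀ k, gfun x1 x2 z k 0 ≤ 0 := by
    rintro (_ | ⟨i, kk⟩)
    · exact le_of_eq (gsn 0)
    · obtain ⟨h1, h2, h3, h4⟩ := h0 i
      fin_cases kk
      · exact (show -x1 0 i ≤ (0:ℝ) by linarith)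
      · exact (show -x2 0 i ≤ (0:ℝ) by linarith)
      · exact (show -z 0 i ≤ (0:ℝ) by linarith)
      · exact (show x1 0 i + x2 0 i + z 0 i - 1 ≤ (0:ℝ) by linarith)
  have hKb : ∀ t, 0 ≤ t → ∀ k, (∀ j, gfun x1 x2 z j t ≤ 1) →
      (∀ j, gfun x1 x2 z j t ≤ gfun x1 x2 z k t) →
      Gfun δ1 δ2 B1 B2 ε1 ε2 x1 x2 z k t ≤ K * gfun x1 x2 z k t := by
    intro t ht k h1 hmax
    have hF0 : (0:ℝ) ≤ gfun x1 x2 z k t := by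
      have h := hmax none; rw [gsn] at h; exact h
    have hF1 : gfun x1 x2 z k t ≤ 1 := h1 k
    have ha : ∀ j, -gfun x1 x2 z k t ≤ x1 t j := by
      intro j; have h := hmax (some (j, 0)); rw [gs0] at h; linarith
    have hb : ∀ j, -gfun x1 x2 z k t ≤ x2 t j := by
      intro j; have h := hmax (some (j, 1)); rw [gs1] at h; linarith
    have hc : ∀ j, -gfun x1 x2 z k t ≤ z t j := by
      intro j; have h := hmax (some (j, 2)); rw [gs2] at h; linarith
    have hd : ∀ j, x1 t j + x2 t j + z t j ≤ 1 + gfun x1 x2 z k t := by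
      intro j; have h := hmax (some (j, 3)); rw [gs3] at h; linarith
    have hP1u : ∀ i0, (∑ j, B1 i0 j * (x1 t j + z t j)) ≤ 8 * ∑ j, B1 i0 j := by
      intro i0
      rw [Finset.mul_sum]
      refine Finset.sum_le_sum fun j _ => ?_
      have h8 : x1 t j + z t j ≤ 8 := by
        have := ha j; have := hb j; have := hc j; have := hd j; linarith
      calc B1 i0 j * (x1 t j + z t j) ≤ B1 i0 j * 8 :=
            mul_le_mul_of_nonneg_left h8 (hB1 i0 j)
        _ = 8 * B1 i0 j := mul_comm _ _
    have hP2u : ∀ i0, (∑ j, B2 i0 j * (x2 t j + z t j)) ≤ 8 * ∑ j, B2 i0 j := by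
      intro i0
      rw [Finset.mul_sum]
      refine Finset.sum_le_sum fun j _ => ?_
      have h8 : x2 t j + z t j ≤ 8 := by
        have := ha j; have := hb j; have := hc j; have := hd j; linarith
      calc B2 i0 j * (x2 t j + z t j) ≤ B2 i0 j * 8 :=
            mul_le_mul_of_nonneg_left h8 (hB2 i0 j)
        _ = 8 * B2 i0 j := mul_comm _ _
    have hP1l : ∀ i0, -(2 * gfun x1 x2 z k t * ∑ j, B1 i0 j)
        ≤ ∑ j, B1 i0 j * (x1 t j + z t j) := by
      intro i0
      calc -(2 * gfun x1 x2 z k t * ∑ j, B1 i0 j)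
          = ∑ j, B1 i0 j * (-(2 * gfun x1 x2 z k t)) := by
            rw [← Finset.sum_mul]; ring
        _ ≤ ∑ j, B1 i0 j * (x1 t j + z t j) := by
            refine Finset.sum_le_sum fun j _ => ?_
            refine mul_le_mul_of_nonneg_left ?_ (hB1 i0 j)
            have := ha j; have := hc j; linarith
    have hP2l : ∀ i0, -(2 * gfun x1 x2 z k t * ∑ j, B2 i0 j)
        ≤ ∑ j, B2 i0 j * (x2 t j + z t j) := by
      intro i0
      calc -(2 * gfun x1 x2 z k t * ∑ j, B2 i0 j)
          = ∑ j, B2 i0 j * (-(2 * gfun x1 x2 z k t)) := by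
            rw [← Finset.sum_mul]; ring
        _ ≤ ∑ j, B2 i0 j * (x2 t j + z t j) := by
            refine Finset.sum_le_sum fun j _ => ?_
            refine mul_le_mul_of_nonneg_left ?_ (hB2 i0 j)
            have := hb j; have := hc j; linarith
    rcases k with _ | ⟨i, kk⟩
    · rw [gsn]; simp [Gfun]
    · fin_cases kk
      · have A0 : (0:ℝ) ≤ -x1 t i := hF0
        have A1 : (-x1 t i) ≤ 1 := hF1
        have Aa : ∀ j, -(-x1 t i) ≤ x1 t j := ha
        have Ab : ∀ j, -(-x1 t i) ≤ x2 t j := hb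
        have Ac : ∀ j, -(-x1 t i) ≤ z t j := hc
        have Ad : ∀ j, x1 t j + x2 t j + z t j ≤ 1 + (-x1 t i) := hd
        have AP1l : ∀ i0, -(2 * (-x1 t i) * ∑ j, B1 i0 j) ≤ ∑ j, B1 i0 j * (x1 t j + z t j) := hP1l
        have AP2l : ∀ i0, -(2 * (-x1 t i) * ∑ j, B2 i0 j) ≤ ∑ j, B2 i0 j * (x2 t j + z t j) := hP2l
        show -(-δ1 i * x1 t i + δ2 i * z t i
          + (1 - x1 t i - x2 t i - z t i) * ∑ j, B1 i j * (x1 t j + z t j)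
          - x1 t i * ε1 * ∑ j, B2 i j * (x2 t j + z t j)) ≤ K * -x1 t i
        have key := case1_bound (d1 := δ1 i) (d2 := δ2 i) (e1 := ε1) (e2 := ε2)
          (a1 := x1 t i) (a2 := x2 t i) (cc := z t i)
          (P1 := ∑ j, B1 i j * (x1 t j + z t j)) (P2 := ∑ j, B2 i j * (x2 t j + z t j))
          (R1 := ∑ j, B1 i j) (R2 := ∑ j, B2 i j) (S1 := S1) (S2 := S2)
          (D1 := D1) (D2 := D2) (F := -x1 t i)
          (by linarith [A0]) (by linarith [A1]) (by ring)
          (by linarith [Ab i]) (by linarith [Ac i]) (by linarith [Ad i])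
          (hδ1 i) (hδ2 i) (hd1D i) (hd2D i) hD1 hD2 hε1 hε2
          (hR1 i) (hR2 i) (hR1S i) (hR2S i) hS1 hS2
          (by linarith [AP1l i]) (by linarith [hP1u i])
          (by linarith [AP2l i]) (by linarith [hP2u i])
        rw [hKdef]
        linarith [key]
      · have A0 : (0:ℝ) ≤ -x2 t i := hF0
        have A1 : (-x2 t i) ≤ 1 := hF1
        have Aa : ∀ j, -(-x2 t i) ≤ x1 t j := ha
        have Ab : ∀ j, -(-x2 t i) ≤ x2 t j := hb
        have Ac : ∀ j, -(-x2 t i) ≤ z t j := hc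
        have Ad : ∀ j, x1 t j + x2 t j + z t j ≤ 1 + (-x2 t i) := hd
        have AP1l : ∀ i0, -(2 * (-x2 t i) * ∑ j, B1 i0 j) ≤ ∑ j, B1 i0 j * (x1 t j + z t j) := hP1l
        have AP2l : ∀ i0, -(2 * (-x2 t i) * ∑ j, B2 i0 j) ≤ ∑ j, B2 i0 j * (x2 t j + z t j) := hP2l
        show -(-δ2 i * x2 t i + δ1 i * z t i
          + (1 - x1 t i - x2 t i - z t i) * ∑ j, B2 i j * (x2 t j + z t j)
          - x2 t i * ε2 * ∑ j, B1 i j * (x1 t j + z t j)) ≤ K * -x2 t i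
        have key := case1_bound (d1 := δ2 i) (d2 := δ1 i) (e1 := ε2) (e2 := ε1)
          (a1 := x2 t i) (a2 := x1 t i) (cc := z t i)
          (P1 := ∑ j, B2 i j * (x2 t j + z t j)) (P2 := ∑ j, B1 i j * (x1 t j + z t j))
          (R1 := ∑ j, B2 i j) (R2 := ∑ j, B1 i j) (S1 := S2) (S2 := S1)
          (D1 := D2) (D2 := D1) (F := -x2 t i)
          (by linarith [A0]) (by linarith [A1]) (by ring)
          (by linarith [Aa i]) (by linarith [Ac i]) (by linarith [Ad i])
          (hδ2 i) (hδ1 i) (hd2D i) (hd1D i) hD2 hD1 hε2 hε1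
          (hR2 i) (hR1 i) (hR2S i) (hR1S i) hS2 hS1
          (by linarith [AP2l i]) (by linarith [hP2u i])
          (by linarith [AP1l i]) (by linarith [hP1u i])
        rw [hKdef]
        linarith [key]
      · have A0 : (0:ℝ) ≤ -z t i := hF0
        have A1 : (-z t i) ≤ 1 := hF1
        have Aa : ∀ j, -(-z t i) ≤ x1 t j := ha
        have Ab : ∀ j, -(-z t i) ≤ x2 t j := hb
        have Ac : ∀ j, -(-z t i) ≤ z t j := hc
        have Ad : ∀ j, x1 t j + x2 t j + z t j ≤ 1 + (-z t i) := hd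
        have AP1l : ∀ i0, -(2 * (-z t i) * ∑ j, B1 i0 j) ≤ ∑ j, B1 i0 j * (x1 t j + z t j) := hP1l
        have AP2l : ∀ i0, -(2 * (-z t i) * ∑ j, B2 i0 j) ≤ ∑ j, B2 i0 j * (x2 t j + z t j) := hP2l
        show -(-(δ1 i + δ2 i) * z t i
          + x1 t i * ε1 * ∑ j, B2 i j * (x2 t j + z t j)
          + x2 t i * ε2 * ∑ j, B1 i j * (x1 t j + z t j)) ≤ K * -z t i
        have key := case3_bound (d1 := δ1 i) (d2 := δ2 i) (e1 := ε1) (e2 := ε2)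
          (a1 := x1 t i) (a2 := x2 t i) (cc := z t i)
          (P1 := ∑ j, B1 i j * (x1 t j + z t j)) (P2 := ∑ j, B2 i j * (x2 t j + z t j))
          (R1 := ∑ j, B1 i j) (R2 := ∑ j, B2 i j) (S1 := S1) (S2 := S2)
          (D1 := D1) (D2 := D2) (F := -z t i)
          (by linarith [A0]) (by linarith [A1]) (by ring)
          (by linarith [Aa i]) (by linarith [Ab i]) (by linarith [Ad i])
          (hδ1 i) (hδ2 i) (hd1D i) (hd2D i) hD1 hD2 hε1 hε2
          (hR1 i) (hR2 i) (hR1S i) (hR2S i) hS1 hS2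
          (by linarith [AP1l i]) (by linarith [hP1u i])
          (by linarith [AP2l i]) (by linarith [hP2u i])
        rw [hKdef]
        linarith [key]
      · have A0 : (0:ℝ) ≤ x1 t i + x2 t i + z t i - 1 := hF0
        have A1 : (x1 t i + x2 t i + z t i - 1) ≤ 1 := hF1
        have Aa : ∀ j, -(x1 t i + x2 t i + z t i - 1) ≤ x1 t j := ha
        have Ab : ∀ j, -(x1 t i + x2 t i + z t i - 1) ≤ x2 t j := hb
        have Ac : ∀ j, -(x1 t i + x2 t i + z t i - 1) ≤ z t j := hc
        have Ad : ∀ j, x1 t j + x2 t j + z t j ≤ 1 + (x1 t i + x2 t i + z t i - 1) := hd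
        have AP1l : ∀ i0, -(2 * (x1 t i + x2 t i + z t i - 1) * ∑ j, B1 i0 j) ≤ ∑ j, B1 i0 j * (x1 t j + z t j) := hP1l
        have AP2l : ∀ i0, -(2 * (x1 t i + x2 t i + z t i - 1) * ∑ j, B2 i0 j) ≤ ∑ j, B2 i0 j * (x2 t j + z t j) := hP2l
        show ((-δ1 i * x1 t i + δ2 i * z t i
          + (1 - x1 t i - x2 t i - z t i) * ∑ j, B1 i j * (x1 t j + z t j)
          - x1 t i * ε1 * ∑ j, B2 i j * (x2 t j + z t j))
          + (-δ2 i * x2 t i + δ1 i * z t i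
          + (1 - x1 t i - x2 t i - z t i) * ∑ j, B2 i j * (x2 t j + z t j)
          - x2 t i * ε2 * ∑ j, B1 i j * (x1 t j + z t j))
          + (-(δ1 i + δ2 i) * z t i
          + x1 t i * ε1 * ∑ j, B2 i j * (x2 t j + z t j)
          + x2 t i * ε2 * ∑ j, B1 i j * (x1 t j + z t j)))
          ≤ K * (x1 t i + x2 t i + z t i - 1)
        have key := case4_bound (d1 := δ1 i) (d2 := δ2 i) (e1 := ε1) (e2 := ε2)
          (a1 := x1 t i) (a2 := x2 t i) (cc := z t i)
          (P1 := ∑ j, B1 i j * (x1 t j + z t j)) (P2 := ∑ j, B2 i j * (x2 t j + z t j))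
          (R1 := ∑ j, B1 i j) (R2 := ∑ j, B2 i j) (S1 := S1) (S2 := S2)
          (D1 := D1) (D2 := D2) (F := x1 t i + x2 t i + z t i - 1)
          (by linarith [A0]) (by linarith [A1]) (by ring)
          (by linarith [Aa i]) (by linarith [Ab i]) (by linarith [Ac i])
          (hδ1 i) (hδ2 i) (hd1D i) (hd2D i) hD1 hD2 hε1 hε2
          (hR1 i) (hR2 i) (hR1S i) (hR2S i) hS1 hS2
          (by linarith [AP1l i]) (by linarith [hP1u i])
          (by linarith [AP2l i]) (by linarith [hP2u i])
        rw [hKdef]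
        linarith [key]
  have main := max_invariance (gfun x1 x2 z) (Gfun δ1 δ2 B1 B2 ε1 ε2 x1 x2 z) K
    hderiv hzero hKb
  intro t ht i
  have m0 := main t ht (some (i, 0))
  have m1 := main t ht (some (i, 1))
  have m2 := main t ht (some (i, 2))
  have m3 := main t ht (some (i, 3))
  rw [gs0] at m0
  rw [gs1] at m1
  rw [gs2] at m2
  rw [gs3] at m3
  simp only [Set.mem_Icc]
  refine ⟨⟨?_, ?_⟩, ⟨?_, ?_⟩, ⟨?_, ?_⟩, ?_, ?_⟩ <;> linarith

end BiVirusMain
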